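/- For integers m > n ≥ 3, the total domatic number of C_m □ K_n equals n. -/

import Mathlib

open SimpleGraph Finset
open Fin.CommRing

/-- A domatic `k`-coloring: every vertex sees all `k` colors in its closed neighborhood. -/
def IsDomaticColoring {V : Type*} (G : SimpleGraph V) (k : ℕ) (f : V → Fin k) : Prop :=
  ∀ v : V, ∀ c : Fin k, ∃ u : V, (u = v ∨ G.Adj v u) ∧ f u = c

/-- A total domatic `k`-coloring: every vertex sees all `k` colors in its open neighborhood. -/
def IsTotalDomaticColoring {V : Type*} (G : SimpleGraph V) (k : ℕ) (f : V → Fin k) : Prop :=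
  ∀ v : V, ∀ c : Fin k, ∃ u : V, G.Adj v u ∧ f u = c

/-- The domatic number `d(G)`. -/
noncomputable def domaticNumber {V : Type*} (G : SimpleGraph V) : ℕ :=
  sSup {k | ∃ f : V → Fin k, IsDomaticColoring G k f}

/-- The total domatic number `d_t(G)`. -/
noncomputable def totalDomaticNumber {V : Type*} (G : SimpleGraph V) : ℕ :=
  sSup {k | ∃ f : V → Fin k, IsTotalDomaticColoring G k f}

def IsDominatingSet {V : Type*} (G : SimpleGraph V) (D : Set V) : Prop :=
  ∀ v : V, v ∈ D ∨ ∃ u ∈ D, G.Adj v u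

def IsTotalDominatingSet {V : Type*} (G : SimpleGraph V) (D : Set V) : Prop :=
  ∀ v : V, ∃ u ∈ D, G.Adj v u

noncomputable def dominationNumber {V : Type*} (G : SimpleGraph V) [Fintype V] : ℕ :=
  sInf {n | ∃ D : Finset V, D.card = n ∧ IsDominatingSet G ↑D}

noncomputable def totalDominationNumber {V : Type*} (G : SimpleGraph V) [Fintype V] : ℕ :=
  sInf {n | ∃ D : Finset V, D.card = n ∧ IsTotalDominatingSet G ↑D}

/-- An injective `k`-coloring: vertices with a common neighbor get distinct colors. -/
def IsInjectiveColoring {V : Type*} (G : SimpleGraph V) (k : ℕ) (f : V → Fin k) : Prop :=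
  ∀ u w v : V, G.Adj v u → G.Adj v w → u ≠ w → f u ≠ f w

noncomputable def injChromaticNumber {V : Type*} (G : SimpleGraph V) : ℕ :=
  sInf {k | ∃ f : V → Fin k, IsInjectiveColoring G k f}

def NoIsolated {V : Type*} (G : SimpleGraph V) : Prop := ∀ v : V, ∃ u, G.Adj v u

/-- The Hamming graph `H(n,q)`: vertices differ in exactly one coordinate. -/
def hammingGraph (n q : ℕ) : SimpleGraph (Fin n → Fin q) :=
  SimpleGraph.fromRel (fun x y => ∃ i, x i ≠ y i ∧ ∀ j, j ≠ i → x j = y j)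

/-- The hypercube `Q n`. -/
def hypercube (n : ℕ) : SimpleGraph (Fin n → Fin 2) := hammingGraph n 2

/-- The torus `C_{k 0} □ ⋯ □ C_{k (d-1)}`. -/
def torusGraph (d : ℕ) (k : Fin d → ℕ) : SimpleGraph (∀ i : Fin d, ZMod (k i)) :=
  SimpleGraph.fromRel (fun x y => ∃ i, x i = y i + 1 ∧ ∀ j, j ≠ i → x j = y j)

lemma cyc_adj_iff {m : ℕ} (i u : Fin (m+2)) :
    (SimpleGraph.cycleGraph (m+2)).Adj i u ↔ u = i + 1 ∨ u = i - 1 := by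
  rw [SimpleGraph.cycleGraph_adj]
  constructor
  · rintro (h | h)
    · right; linear_combination -h
    · left; linear_combination h
  · rintro (h | h)
    · right; linear_combination h
    · left; linear_combination -h

lemma fin_succ_eq {m : ℕ} (i : Fin (m+2)) (h : i.val + 1 < m+2) :
    (⟨i.val+1, h⟩ : Fin (m+2)) = i + 1 := by
  rw [Fin.add_def]
  apply Fin.ext
  simp [Nat.mod_eq_of_lt h]

lemma fin_pred_eq {m : ℕ} (i : Fin (m+2)) (h : 1 ≤ i.val) (h' : i.val - 1 < m+2) :
    (⟨i.val-1, h'⟩ : Fin (m+2)) = i - 1 := by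
  rw [Fin.sub_def]
  apply Fin.ext
  simp only [Fin.val_one]
  have hlt := i.isLt
  rw [show m+2 - 1 + i.val = (i.val - 1) + 1*(m+2) by omega, Nat.add_mul_mod_self_right]
  exact (Nat.mod_eq_of_lt (by omega)).symm

theorem totalDomatic_cycle_boxProd_complete (m n : ℕ) (h3 : 3 ≤ n) (hmn : n < m) :
    totalDomaticNumber (SimpleGraph.cycleGraph m □ (⊤ : SimpleGraph (Fin n))) = n := by
  obtain ⟨m', rfl⟩ : ∃ k, m = k + 2 := ⟨m - 2, by omega⟩
  obtain ⟨n', rfl⟩ : ∃ k, n = k + 3 := ⟨n - 3, by omega⟩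
  have hm' : 2 ≤ m' := by omega
  set N := n' + 3 with hN
  set M := m' + 2 with hM
  set G := SimpleGraph.cycleGraph M □ (⊤ : SimpleGraph (Fin N)) with hG
  -- basic Fin facts
  have two_val : (2 : Fin M).val = 2 := by
    rw [show (2 : Fin M) = 1+1 by norm_num, Fin.add_def, Fin.val_one]
    exact Nat.mod_eq_of_lt (by omega)
  have hpm : ∀ i : Fin M, i + 1 ≠ i - 1 := by
    intro i h
    have h2 : (2 : Fin M) = 0 := by linear_combination h
    have := congrArg Fin.val h2
    rw [two_val] at this
    simp at this
  have hp_ne : ∀ i : Fin M, i + 1 ≠ i := by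
    intro i h
    have h1 : (1 : Fin M) = 0 := by linear_combination h
    have := congrArg Fin.val h1
    rw [Fin.val_one] at this
    simp at this
  have hm_ne : ∀ i : Fin M, i - 1 ≠ i := by
    intro i h
    have h1 : (1 : Fin M) = 0 := by linear_combination -h
    have := congrArg Fin.val h1
    rw [Fin.val_one] at this
    simp at this
  -- adjacency characterization in G
  have hadj : ∀ v u : Fin M × Fin N, G.Adj v u ↔
      ((u = (v.1+1, v.2) ∨ u = (v.1-1, v.2)) ∨ (u.1 = v.1 ∧ u.2 ≠ v.2)) := by
    intro v u
    rw [hG, SimpleGraph.boxProd_adj, cyc_adj_iff]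
    simp only [SimpleGraph.top_adj, cyc_adj_iff, Prod.ext_iff]
    constructor
    · rintro (⟨h1 | h1, h2⟩ | ⟨h1, h2⟩)
      · exact Or.inl (Or.inl ⟨h1, h2.symm⟩)
      · exact Or.inl (Or.inr ⟨h1, h2.symm⟩)
      · exact Or.inr ⟨h2.symm, h1.symm⟩
    · rintro ((⟨h1, h2⟩ | ⟨h1, h2⟩) | ⟨h1, h2⟩)
      · exact Or.inl ⟨Or.inl h1, h2.symm⟩
      · exact Or.inl ⟨Or.inr h1, h2.symm⟩
      · exact Or.inr ⟨fun h => h2 h.symm, h1.symm⟩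
  -- ===== LOWER BOUND : N ∈ the set =====
  have hmem : N ∈ {k | ∃ f : Fin M × Fin N → Fin k, IsTotalDomaticColoring G k f} := by
    classical
    set a : Fin M → ℕ := fun i => min (i.val / 2) (m' / 2) with ha
    have key : ∀ i : Fin M, ∃ i', (SimpleGraph.cycleGraph M).Adj i i' ∧ a i' = a i := by
      intro i
      have hlt := i.isLt
      rcases Nat.even_or_odd i.val with he | ho
      · by_cases h : i.val + 1 < M
        · refine ⟨⟨i.val+1, h⟩, ?_, ?_⟩
          · rw [fin_succ_eq i h, cyc_adj_iff]; exact Or.inl rfl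
          · simp only [ha]; obtain ⟨t, ht⟩ := he; omega
        · -- i.val = m'+1, even
          have h1 : 1 ≤ i.val := by omega
          refine ⟨⟨i.val-1, by omega⟩, ?_, ?_⟩
          · rw [fin_pred_eq i h1, cyc_adj_iff]; exact Or.inr rfl
          · simp only [ha]; obtain ⟨t, ht⟩ := he; omega
      · have h1 : 1 ≤ i.val := by
          rcases ho with ⟨t, ht⟩; omega
        refine ⟨⟨i.val-1, by omega⟩, ?_, ?_⟩
        · rw [fin_pred_eq i h1, cyc_adj_iff]; exact Or.inr rfl
        · simp only [ha]; obtain ⟨t, ht⟩ := ho; omega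
    refine ⟨fun p => p.2 + (a p.1 : Fin N), ?_⟩
    rintro ⟨i, j⟩ c
    by_cases hc : c = j + (a i : Fin N)
    · obtain ⟨i', hadj', ha'⟩ := key i
      refine ⟨(i', j), ?_, ?_⟩
      · rw [hG, SimpleGraph.boxProd_adj]; exact Or.inl ⟨hadj', rfl⟩
      · simp only [ha']; exact hc.symm
    · refine ⟨(i, c - (a i : Fin N)), ?_, ?_⟩
      · rw [hG, SimpleGraph.boxProd_adj]
        refine Or.inr ⟨?_, rfl⟩
        simp only [SimpleGraph.top_adj]
        intro h
        apply hc
        rw [← sub_add_cancel c ((a i : Fin N)), ← h]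
      · exact sub_add_cancel c _
  -- ===== UPPER BOUND : every k in the set is ≤ N =====
  have hub : ∀ k ∈ {k | ∃ f : Fin M × Fin N → Fin k, IsTotalDomaticColoring G k f}, k ≤ N := by
    classical
    rintro k ⟨f, hf⟩
    by_contra hk'
    push_neg at hk'
    have hk : N + 1 ≤ k := hk'
    -- injectivity on neighborhoods
    have hmain : ∀ v : Fin M × Fin N,
        k ≤ N + 1 ∧ ∀ u w : Fin M × Fin N, G.Adj v u → G.Adj v w → u ≠ w → f u ≠ f w := by
      intro v
      set A : Finset (Fin M × Fin N) :=
        insert (v.1-1, v.2) (insert (v.1+1, v.2)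
          (((univ : Finset (Fin N)).erase v.2).image fun j => (v.1, j))) with hA
      have hsubA : ∀ x, G.Adj v x → x ∈ A := by
        intro x hx
        rw [hadj] at hx
        rcases hx with (hx | hx) | ⟨hx1, hx2⟩
        · subst hx; simp [hA]
        · subst hx; simp [hA]
        · rw [hA]
          apply mem_insert_of_mem; apply mem_insert_of_mem
          refine mem_image.mpr ⟨x.2, mem_erase.mpr ⟨hx2, mem_univ _⟩, ?_⟩
          rw [← hx1]
      have hcardA : A.card ≤ N + 1 := by
        calc A.card ≤ (insert (v.1+1, v.2)
              (((univ : Finset (Fin N)).erase v.2).image fun j => (v.1, j))).card + 1 :=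
              card_insert_le _ _
          _ ≤ ((((univ : Finset (Fin N)).erase v.2).image fun j => (v.1, j)).card + 1) + 1 := by
              have := card_insert_le (v.1+1, v.2)
                (((univ : Finset (Fin N)).erase v.2).image fun j => (v.1, j))
              omega
          _ ≤ ((((univ : Finset (Fin N)).erase v.2)).card + 1) + 1 := by
              have := card_image_le (s := ((univ : Finset (Fin N)).erase v.2))
                (f := fun j => (v.1, j))
              omega
          _ ≤ N + 1 := by
              rw [card_erase_of_mem (mem_univ _), card_univ, Fintype.card_fin]
              omega
      have himgsub : (univ : Finset (Fin k)) ⊆ A.image f := by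
        intro c _
        obtain ⟨x, hx, hfx⟩ := hf v c
        exact mem_image.mpr ⟨x, hsubA x hx, hfx⟩
      have hcards : k ≤ (A.image f).card := by
        have := card_le_card himgsub
        rwa [card_univ, Fintype.card_fin] at this
      have himg : (A.image f).card = A.card :=
        le_antisymm card_image_le (le_trans (le_trans hcardA hk) hcards)
      have hinj := Finset.injOn_of_card_image_eq himg
      refine ⟨le_trans hcards (le_of_eq_of_le himg hcardA), ?_⟩
      intro u w h1 h2 hne heq
      exact hne (hinj (hsubA u h1) (hsubA w h2) heq)
    have injP : ∀ v u w : Fin M × Fin N, G.Adj v u → G.Adj v w → u ≠ w → f u ≠ f w :=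
      fun v => (hmain v).2
    have hkeq : k = N + 1 := le_antisymm (hmain (0, ⟨0, by omega⟩)).1 hk
    -- distinct colors within a column
    have colD : ∀ (i : Fin M) (j j' : Fin N), j ≠ j' → f (i, j) ≠ f (i, j') := by
      intro i j j' hjj
      have hcard : (((univ : Finset (Fin N)).erase j).erase j').Nonempty := by
        apply card_pos.mp
        have h1 := card_erase_of_mem (a := j) (mem_univ (α := Fin N) j)
        have h2 : (((univ : Finset (Fin N)).erase j).erase j').card
            ≥ ((univ : Finset (Fin N)).erase j).card - 1 := by
          have := Finset.pred_card_le_card_erase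
            (s := ((univ : Finset (Fin N)).erase j)) (a := j')
          omega
        rw [card_univ, Fintype.card_fin] at h1
        omega
      obtain ⟨j'', hj''⟩ := hcard
      rw [mem_erase, mem_erase] at hj''
      obtain ⟨hj2, hj1, -⟩ := hj''
      refine injP (i, j'') (i, j) (i, j') ?_ ?_ ?_
      · rw [hadj]; exact Or.inr ⟨rfl, Ne.symm hj1⟩
      · rw [hadj]; exact Or.inr ⟨rfl, Ne.symm hj2⟩
      · simp [Prod.ext_iff, hjj]
    -- the main contradiction
    set i₀ : Fin M := 0 with hi₀
    -- column colors
    set Col : Finset (Fin k) := (univ : Finset (Fin N)).image (fun j => f (i₀, j)) with hCol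
    have hColCard : Col.card = N := by
      rw [hCol, card_image_of_injOn, card_univ, Fintype.card_fin]
      intro j _ j' _ h
      by_contra hne
      exact colD i₀ j j' hne h
    set CC : Finset (Fin k) := univ \ Col with hCC
    have hCCcard : CC.card = 1 := by
      rw [hCC, card_sdiff_of_subset (subset_univ _), card_univ, Fintype.card_fin, hColCard, hkeq]
      omega
    -- the "other side" vertex
    set w : Fin N → Fin M × Fin N :=
      fun j => if f (i₀-1, j) = f (i₀, j) then (i₀+1, j) else (i₀-1, j) with hw
    have hw2 : ∀ j, (w j).2 = j := by
      intro j; rw [hw]; dsimp only; split <;> rfl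
    have hw1 : ∀ j, (w j).1 = i₀+1 ∨ (w j).1 = i₀-1 := by
      intro j; rw [hw]; dsimp only; split
      · exact Or.inl rfl
      · exact Or.inr rfl
    have hwadj : ∀ j, G.Adj (i₀, j) (w j) := by
      intro j
      rw [hadj, hw]; dsimp only
      split
      · exact Or.inl (Or.inl rfl)
      · exact Or.inl (Or.inr rfl)
    have hwne : ∀ j j'', f (w j) ≠ f (i₀, j'') := by
      intro j j''
      by_cases hj : j'' = j
      · subst hj
        rw [hw]; dsimp only
        split
        · rename_i hsp
          rw [← hsp]
          refine injP (i₀, j'') (i₀+1, j'') (i₀-1, j'') ?_ ?_ ?_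
          · rw [hadj]; exact Or.inl (Or.inl rfl)
          · rw [hadj]; exact Or.inl (Or.inr rfl)
          · simp [Prod.ext_iff]; intro h; exact absurd h (hpm i₀)
        · rename_i hsp; exact hsp
      · refine injP (i₀, j) (w j) (i₀, j'') ?_ ?_ ?_
        · exact hwadj j
        · rw [hadj]; exact Or.inr ⟨rfl, hj⟩
        · intro h
          have h1 := congrArg Prod.fst h
          rcases hw1 j with h2 | h2 <;> rw [h2] at h1
          · exact hp_ne i₀ h1
          · exact hm_ne i₀ h1
    have hwCC : ∀ j, f (w j) ∈ CC := by
      intro j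
      rw [hCC, mem_sdiff]
      refine ⟨mem_univ _, ?_⟩
      rw [hCol, mem_image]
      rintro ⟨j'', -, hj''⟩
      exact hwne j j'' hj''.symm
    have hsame : ∀ j j', f (w j) = f (w j') := by
      intro j j'
      exact Finset.card_le_one.mp (le_of_eq hCCcard) _ (hwCC j) _ (hwCC j')
    -- pigeonhole on three columns
    have pair : ∀ j j' : Fin N, j ≠ j' → (w j).1 = (w j').1 → False := by
      intro j j' hne h1
      have hwj : w j = ((w j).1, j) := Prod.ext rfl (hw2 j)
      have hwj' : w j' = ((w j).1, j') := by
        rw [Prod.ext_iff]; exact ⟨h1.symm, hw2 j'⟩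
      have := hsame j j'
      rw [hwj, hwj'] at this
      exact colD _ j j' hne this
    have j0 : Fin N := ⟨0, by omega⟩
    have hj01 : (⟨0, by omega⟩ : Fin N) ≠ ⟨1, by omega⟩ := by simp [Fin.ext_iff]
    have hj02 : (⟨0, by omega⟩ : Fin N) ≠ ⟨2, by omega⟩ := by simp [Fin.ext_iff]
    have hj12 : (⟨1, by omega⟩ : Fin N) ≠ ⟨2, by omega⟩ := by simp [Fin.ext_iff]
    rcases hw1 ⟨0, by omega⟩ with h0 | h0 <;>
      rcases hw1 ⟨1, by omega⟩ with h1 | h1 <;>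
      rcases hw1 ⟨2, by omega⟩ with h2 | h2 <;>
      first
      | exact pair _ _ hj01 (h0.trans h1.symm)
      | exact pair _ _ hj02 (h0.trans h2.symm)
      | exact pair _ _ hj12 (h1.trans h2.symm)
  -- ===== Conclusion =====
  rw [totalDomaticNumber]
  apply le_antisymm
  · exact csSup_le ⟨N, hmem⟩ hub
  · exact le_csSup ⟨N, fun k hk => hub k hk⟩ hmem
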